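/- Let R be a ring and let M be a subprojective extension-reflecting (sp.e.r.) R-module. Then every cyclic R-module is M-subprojective if and only if every finitely generated R-module is M-subprojective. -/

import Mathlib

universe u

/-- `IsSubinjective R B A` means: the `R`-module `B` is `A`-subinjective, i.e. for every
`R`-module `C`, every injective `R`-linear map `i : A → C` and every `R`-linear map
`f : A → B`, there is an `R`-linear map `g : C → B` with `g ∘ i = f`. -/
def IsSubinjective (R : Type u) [Ring R] (B : Type u) [AddCommGroup B] [Module R B]
    (A : Type u) [AddCommGroup A] [Module R A] : Prop :=
  ∀ (C : Type u) [AddCommGroup C] [Module R C] (i : A →ₗ[R] C),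
    Function.Injective i → ∀ f : A →ₗ[R] B, ∃ g : C →ₗ[R] B, g ∘ₗ i = f

/-- `IsSubprojective R B A` means: the `R`-module `B` is `A`-subprojective, i.e. for every
`R`-module `C`, every surjective `R`-linear map `g : C → A` and every `R`-linear map
`f : B → A`, there is an `R`-linear map `h : B → C` with `g ∘ h = f`. -/
def IsSubprojective (R : Type u) [Ring R] (B : Type u) [AddCommGroup B] [Module R B]
    (A : Type u) [AddCommGroup A] [Module R A] : Prop :=
  ∀ (C : Type u) [AddCommGroup C] [Module R C] (g : C →ₗ[R] A),
    Function.Surjective g → ∀ f : B →ₗ[R] A, ∃ h : B →ₗ[R] C, g ∘ₗ h = f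

/-- `M` is subinjective extension-reflecting (si.e.r.): for every short exact sequence
`0 → A → B → C → 0`, if `A` and `C` are `M`-subinjective, then so is `B`. -/
def IsSIER (R : Type u) [Ring R] (M : Type u) [AddCommGroup M] [Module R M] : Prop :=
  ∀ (A B C : Type u) [AddCommGroup A] [Module R A] [AddCommGroup B] [Module R B]
    [AddCommGroup C] [Module R C] (f : A →ₗ[R] B) (g : B →ₗ[R] C),
    Function.Injective f → Function.Surjective g → Function.Exact f g →
    IsSubinjective R A M → IsSubinjective R C M → IsSubinjective R B M

/-- `M` is subprojective extension-reflecting (sp.e.r.): for every short exact sequence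
`0 → A → B → C → 0`, if `A` and `C` are `M`-subprojective, then so is `B`. -/
def IsSPER (R : Type u) [Ring R] (M : Type u) [AddCommGroup M] [Module R M] : Prop :=
  ∀ (A B C : Type u) [AddCommGroup A] [Module R A] [AddCommGroup B] [Module R B]
    [AddCommGroup C] [Module R C] (f : A →ₗ[R] B) (g : B →ₗ[R] C),
    Function.Injective f → Function.Surjective g → Function.Exact f g →
    IsSubprojective R A M → IsSubprojective R C M → IsSubprojective R B M

set_option maxHeartbeats 1000000 in
/-- For an sp.e.r. module `M`: every cyclic module is `M`-subprojective if and only if every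
finitely generated module is `M`-subprojective. -/
theorem sper_cyclic_iff_fg_subprojective (R : Type u) [Ring R]
    (M : Type u) [AddCommGroup M] [Module R M] (hM : IsSPER R M) :
    (∀ (N : Type u) [AddCommGroup N] [Module R N],
        (∃ x : N, Submodule.span R {x} = ⊤) → IsSubprojective R N M) ↔
      (∀ (N : Type u) [AddCommGroup N] [Module R N], Module.Finite R N →
        IsSubprojective R N M) := by

  constructor
  · intro hcyc
    suffices h : ∀ (n : ℕ) (N : Type u) [AddCommGroup N] [Module R N] (s : Finset N),
        s.card ≤ n → Submodule.span R (s : Set N) = ⊤ → IsSubprojective R N M by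
      intro N _ _ hfin
      obtain ⟨s, hs⟩ := hfin.fg_top
      exact h s.card N s le_rfl hs
    intro n
    induction n with
    | zero =>
      intro N _ _ s hcard hspan
      have hs : s = ∅ := Finset.card_eq_zero.mp (le_antisymm hcard (Nat.zero_le _))
      subst hs
      simp only [Finset.coe_empty, Submodule.span_empty] at hspan
      apply hcyc
      refine ⟨0, ?_⟩
      rw [Submodule.span_zero_singleton]
      exact hspan
    | succ n ih =>
      intro N _ _ s hcard hspan
      classical
      rcases s.eq_empty_or_nonempty with rfl | ⟨x, hx⟩
      · simp only [Finset.coe_empty, Submodule.span_empty] at hspan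
        apply hcyc
        refine ⟨0, ?_⟩
        rw [Submodule.span_zero_singleton]
        exact hspan
      · set t := s.erase x with ht
        set A := Submodule.span R (t : Set N) with hA
        have hAsub : IsSubprojective R A M := by
          refine ih A (t.attach.image fun y => (⟨y.1, Submodule.subset_span y.2⟩ : A)) ?_ ?_
          · refine le_trans Finset.card_image_le ?_
            rw [Finset.card_attach, ht, Finset.card_erase_of_mem hx]
            omega
          · apply Submodule.map_injective_of_injective A.injective_subtype
            rw [Submodule.map_span, Submodule.map_top, Submodule.range_subtype]
            have himg : (A.subtype : A → N) ''
                ((t.attach.image fun y => (⟨y.1, Submodule.subset_span y.2⟩ : A)) : Set A)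
                = (t : Set N) := by
              ext z
              constructor
              · rintro ⟨w, hw, rfl⟩
                simp only [Finset.coe_image, Set.mem_image, Finset.mem_coe,
                  Finset.mem_attach] at hw
                obtain ⟨y, -, rfl⟩ := hw
                exact y.2
              · intro hz
                refine ⟨⟨z, Submodule.subset_span hz⟩, ?_, rfl⟩
                exact Finset.mem_coe.mpr
                  (Finset.mem_image.mpr ⟨⟨z, hz⟩, Finset.mem_attach _ _, rfl⟩)
            rw [himg, ← hA]
        have hQ : IsSubprojective R (N ⧸ A) M := by
          apply hcyc
          refine ⟨A.mkQ x, ?_⟩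
          have h1 : Submodule.span R ({A.mkQ x} : Set (N ⧸ A)) =
              Submodule.map A.mkQ (Submodule.span R {x}) := by
            rw [Submodule.map_span, Set.image_singleton]
          have h2 : Submodule.span R ({x} : Set N) ⊔ A = ⊤ := by
            rw [hA, ← Submodule.span_union]
            have : ({x} : Set N) ∪ (t : Set N) = (s : Set N) := by
              rw [Set.singleton_union, ht, Finset.coe_erase, Set.insert_diff_singleton]
              exact Set.insert_eq_self.mpr hx
            rw [this, hspan]
          have h3 : Submodule.map A.mkQ A = ⊥ := by
            rw [eq_bot_iff]
            rintro z ⟨y, hy, rfl⟩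
            simpa [Submodule.mkQ_apply, Submodule.Quotient.mk_eq_zero] using hy
          calc Submodule.span R ({A.mkQ x} : Set (N ⧸ A))
              = Submodule.map A.mkQ (Submodule.span R {x}) ⊔ Submodule.map A.mkQ A := by
                rw [h1, h3, sup_bot_eq]
            _ = Submodule.map A.mkQ (Submodule.span R {x} ⊔ A) := (Submodule.map_sup _ _ _).symm
            _ = Submodule.map A.mkQ ⊤ := by rw [h2]
            _ = ⊤ := by rw [Submodule.map_top, Submodule.range_mkQ]
        refine hM A N (N ⧸ A) A.subtype A.mkQ ?_ ?_ ?_ hAsub hQ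
        · exact A.injective_subtype
        · exact A.mkQ_surjective
        · intro y
          rw [Submodule.mkQ_apply, Submodule.Quotient.mk_eq_zero]
          constructor
          · intro hy
            exact ⟨⟨y, hy⟩, rfl⟩
          · rintro ⟨z, rfl⟩
            exact z.2
  · intro hfg N _ _ hx
    obtain ⟨x, hx⟩ := hx
    refine hfg N ⟨⟨{x}, by simpa using hx⟩⟩
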